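/- Let T be a torsion abelian group with primary decomposition T = ⊕_{p prime} T_p, where T_p is the p-primary component of T. Then T is Bassian-finite if and only if each primary component T_p is Bassian-finite. -/

import Mathlib

/-- An abelian group `G` is *Bassian-finite* if there is no injective homomorphism
from `G` into a proper direct summand of `G`. -/
def BassianFinite (G : Type*) [AddCommGroup G] : Prop :=
  ∀ A B : AddSubgroup G, IsCompl A B → B ≠ ⊥ → ∀ φ : G →+ A, ¬ Function.Injective φ

section Aux

variable {G : Type*} [AddCommGroup G]

lemma aux_exists_add {A B : AddSubgroup G} (h : IsCompl A B) (x : G) :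
    ∃ a ∈ A, ∃ b ∈ B, a + b = x := by
  have hx : x ∈ A ⊔ B := by rw [codisjoint_iff.mp h.codisjoint]; trivial
  exact AddSubgroup.mem_sup.mp hx

lemma aux_disjoint_zero {A B : AddSubgroup G} (h : Disjoint A B) {x : G}
    (hA : x ∈ A) (hB : x ∈ B) : x = 0 :=
  AddSubgroup.disjoint_def.mp h hA hB

lemma aux_add_eq_zero {A B : AddSubgroup G} (h : Disjoint A B) {a b : G}
    (ha : a ∈ A) (hb : b ∈ B) (hab : a + b = 0) : a = 0 ∧ b = 0 := by
  have hba : a = -b := eq_neg_of_add_eq_zero_left hab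
  have ha0 : a = 0 := aux_disjoint_zero h ha (hba ▸ neg_mem hb)
  exact ⟨ha0, by rwa [ha0, zero_add] at hab⟩

/-- The subgroup of elements whose order is coprime to `p`. -/
def coprimeComponent (G : Type*) [AddCommGroup G] (p : ℕ) [hp : Fact p.Prime] :
    AddSubgroup G where
  carrier := {x | ¬ p ∣ addOrderOf x}
  zero_mem' := by simp [hp.out.one_lt.ne']
  add_mem' := by
    intro a b ha hb
    simp only [Set.mem_setOf_eq] at *
    intro hdvd
    have h1 : addOrderOf (a + b) ∣ Nat.lcm (addOrderOf a) (addOrderOf b) :=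
      (AddCommute.all a b).addOrderOf_add_dvd_lcm
    have h2 : p ∣ Nat.lcm (addOrderOf a) (addOrderOf b) := hdvd.trans h1
    rcases (Nat.Prime.dvd_mul hp.out).mp (h2.trans (Nat.lcm_dvd_mul _ _)) with h | h
    · exact ha h
    · exact hb h
  neg_mem' := by intro a ha; simpa using ha

lemma mem_coprimeComponent {p : ℕ} [Fact p.Prime] {x : G} :
    x ∈ coprimeComponent G p ↔ ¬ p ∣ addOrderOf x := Iff.rfl

lemma isCompl_primary_coprime (p : ℕ) [hp : Fact p.Prime] (hT : AddMonoid.IsTorsion G) :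
    IsCompl (AddCommGroup.primaryComponent G p) (coprimeComponent G p) := by
  constructor
  · rw [AddSubgroup.disjoint_def]
    rintro x ⟨n', hn'⟩ hx
    obtain ⟨n, -, hn⟩ := (Nat.dvd_prime_pow hp.out).mp (addOrderOf_dvd_of_nsmul_eq_zero hn')
    rw [mem_coprimeComponent, hn] at hx
    rcases Nat.eq_zero_or_pos n with rfl | hpos
    · rwa [pow_zero, AddMonoid.addOrderOf_eq_one_iff] at hn
    · exact absurd (dvd_pow_self p hpos.ne') hx
  · rw [codisjoint_iff_le_sup]
    intro x _
    set n := addOrderOf x with hn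
    have hn0 : n ≠ 0 := (hT x).addOrderOf_pos.ne'
    set k := n.factorization p with hk
    set m := n / p ^ k with hm
    have hmn : p ^ k * m = n := Nat.ordProj_mul_ordCompl_eq_self n p
    have hpm : ¬ p ∣ m := Nat.not_dvd_ordCompl hp.out hn0
    have hcop : Nat.Coprime (p ^ k) m :=
      Nat.Coprime.pow_left _ ((Nat.Prime.coprime_iff_not_dvd hp.out).mpr hpm)
    have hbez : (1 : ℤ) = (p ^ k : ℕ) * Nat.gcdA (p ^ k) m + (m : ℕ) * Nat.gcdB (p ^ k) m := by
      have := Nat.gcd_eq_gcd_ab (p ^ k) m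
      rwa [Nat.Coprime.gcd_eq_one hcop, Nat.cast_one] at this
    set a := Nat.gcdA (p ^ k) m
    set b := Nat.gcdB (p ^ k) m
    have hnx : (n : ℤ) • x = 0 := by
      rw [natCast_zsmul]; exact addOrderOf_nsmul_eq_zero x
    have hu : ((m : ℤ) * b) • x ∈ AddCommGroup.primaryComponent G p := by
      have : (p ^ k : ℕ) • (((m : ℤ) * b) • x) = 0 := by
        rw [← natCast_zsmul, smul_smul,
          show ((p ^ k : ℕ) : ℤ) * ((m : ℤ) * b) = b * (n : ℤ) by
            rw [← hmn]; push_cast; ring,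
          mul_smul, hnx, smul_zero]
      obtain ⟨j, hj, hje⟩ := (Nat.dvd_prime_pow hp.out).mp
        (addOrderOf_dvd_of_nsmul_eq_zero this)
      exact ⟨j, by rw [← hje]; exact addOrderOf_nsmul_eq_zero _⟩
    have hv : (((p ^ k : ℕ) : ℤ) * a) • x ∈ coprimeComponent G p := by
      rw [mem_coprimeComponent]
      have hmv : (m : ℕ) • ((((p ^ k : ℕ) : ℤ) * a) • x) = 0 := by
        rw [← natCast_zsmul, smul_smul,
          show ((m : ℕ) : ℤ) * (((p ^ k : ℕ) : ℤ) * a) = a * (n : ℤ) by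
            rw [← hmn]; push_cast; ring,
          mul_smul, hnx, smul_zero]
      intro hpd
      exact hpm (hpd.trans (addOrderOf_dvd_of_nsmul_eq_zero hmv))
    refine AddSubgroup.mem_sup.mpr ⟨_, hu, _, hv, ?_⟩
    have h1 : (m : ℤ) * b + ((p ^ k : ℕ) : ℤ) * a = 1 := by linarith [hbez]
    rw [← add_zsmul, h1, one_zsmul]

end Aux

/-- A torsion abelian group is Bassian-finite if and only if each of its `p`-primary
components is Bassian-finite. -/
theorem bassianFinite_iff_forall_primaryComponent (T : Type*) [AddCommGroup T]
    (hT : AddMonoid.IsTorsion T) :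
    BassianFinite T ↔
      ∀ (p : ℕ) (hp : Fact p.Prime), BassianFinite (AddCommGroup.primaryComponent T p) := by
  constructor
  · -- forward: T Bassian-finite → each component Bassian-finite
    intro hBF p hp
    haveI := hp
    set Tp := AddCommGroup.primaryComponent T p with hTpdef
    set C := coprimeComponent T p with hCdef
    have hTC : IsCompl Tp C := isCompl_primary_coprime p hT
    intro Ap Bp hcompl hBpne φ hφ
    -- projections coming from the splitting T = Tp ⊕ C
    have h1 : IsCompl (AddSubgroup.toIntSubmodule Tp) (AddSubgroup.toIntSubmodule C) :=
      AddSubgroup.toIntSubmodule.isCompl hTC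
    set π1 := Submodule.projectionOnto _ _ h1 with hπ1
    set π2 := Submodule.projectionOnto _ _ h1.symm with hπ2
    have hsum : ∀ x : T, ((π1 x : T) + (π2 x : T)) = x :=
      Submodule.projection_add_projection_eq_self h1
    -- repackaging maps
    let ι1 : ↥(AddSubgroup.toIntSubmodule Tp) →+ Tp :=
      AddMonoidHom.mk' (fun y => ⟨(y : T), y.2⟩) (fun a b => rfl)
    let ι2 : ↥(AddSubgroup.toIntSubmodule C) →+ C :=
      AddMonoidHom.mk' (fun y => ⟨(y : T), y.2⟩) (fun a b => rfl)
    set A' := Ap.map Tp.subtype ⊔ C with hA'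
    set B' := Bp.map Tp.subtype with hB'
    -- the candidate injection T → A'
    set Φ0 : T →+ T :=
      (Tp.subtype.comp ((Ap.subtype.comp φ).comp (ι1.comp π1.toAddMonoidHom))) +
        (C.subtype.comp (ι2.comp π2.toAddMonoidHom)) with hΦ0
    have hΦ0apply : ∀ x : T, Φ0 x = ((φ (ι1 (π1 x)) : Tp) : T) + ((ι2 (π2 x) : C) : T) :=
      fun x => rfl
    have hrange : ∀ x : T, Φ0 x ∈ A' := by
      intro x
      rw [hΦ0apply]
      refine add_mem (AddSubgroup.mem_sup_left ?_) (AddSubgroup.mem_sup_right ?_)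
      · exact ⟨_, (φ (ι1 (π1 x))).2, rfl⟩
      · exact (ι2 (π2 x)).2
    set Φ : T →+ A' := Φ0.codRestrict A' hrange with hΦ
    have hΦinj : Function.Injective Φ := by
      rw [injective_iff_map_eq_zero]
      intro x hx
      have hx0 : Φ0 x = 0 := Subtype.ext_iff.mp hx
      rw [hΦ0apply] at hx0
      obtain ⟨hz1, hz2⟩ := aux_add_eq_zero hTC.disjoint
        (((φ (ι1 (π1 x))) : Tp).2) ((ι2 (π2 x)).2) hx0
      have hp1 : π1 x = 0 := by
        have e1 : φ (ι1 (π1 x)) = 0 := by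
          ext; exact_mod_cast hz1
        have e2 : ι1 (π1 x) = 0 := by
          apply hφ; rw [e1, map_zero]
        ext
        exact_mod_cast congrArg (fun z : Tp => (z : T)) e2
      have hp2 : π2 x = 0 := by
        ext; exact_mod_cast hz2
      have := hsum x
      rw [hp1, hp2] at this
      simpa using this.symm
    -- A' and B' are complementary, B' ≠ ⊥
    have hdis : Disjoint A' B' := by
      rw [AddSubgroup.disjoint_def]
      intro x hxA hxB
      obtain ⟨bb, hbb, rfl⟩ := hxB
      obtain ⟨y, hy, c, hc, hyc⟩ := AddSubgroup.mem_sup.mp hxA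
      obtain ⟨aa, haa, rfl⟩ := hy
      have hcTp : c ∈ Tp := by
        have : c = (bb : T) - (aa : T) := by
          rw [eq_sub_iff_add_eq, add_comm]; exact hyc
        rw [this]
        exact sub_mem bb.2 aa.2
      have hc0 : c = 0 := aux_disjoint_zero hTC.disjoint hcTp hc
      rw [hc0, add_zero] at hyc
      have : aa = bb := Subtype.ext hyc
      have hbb0 : bb = 0 := aux_disjoint_zero hcompl.disjoint (this ▸ haa) hbb
      rw [hbb0]; rfl
    have hcodis : Codisjoint A' B' := by
      rw [codisjoint_iff]
      rw [hA', hB', sup_right_comm, ← AddSubgroup.map_sup,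
        codisjoint_iff.mp hcompl.codisjoint, ← AddMonoidHom.range_eq_map,
        AddSubgroup.range_subtype]
      exact codisjoint_iff.mp hTC.codisjoint
    have hB'ne : B' ≠ ⊥ := by
      intro h
      exact hBpne ((AddSubgroup.map_eq_bot_iff_of_injective Bp Subtype.coe_injective).mp h)
    exact hBF A' B' ⟨hdis, hcodis⟩ hB'ne Φ hΦinj
  · -- converse: each component Bassian-finite → T Bassian-finite
    intro hAll A B hAB hBne φ hφ
    -- find a prime p with a nonzero element of order p in B
    obtain ⟨b0, hb00⟩ := AddSubgroup.ne_bot_iff_exists_ne_zero.mp hBne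
    set n := addOrderOf (b0 : T) with hn
    have hn0 : n ≠ 0 := (hT (b0 : T)).addOrderOf_pos.ne'
    have hn1 : n ≠ 1 := by
      intro h
      apply hb00
      have : (b0 : T) = 0 := AddMonoid.addOrderOf_eq_one_iff.mp (hn ▸ h)
      exact Subtype.ext this
    obtain ⟨p, hp, hpn⟩ := Nat.exists_prime_and_dvd hn1
    haveI hpf : Fact p.Prime := ⟨hp⟩
    set Tp := AddCommGroup.primaryComponent T p with hTpdef
    set b' : T := (n / p) • (b0 : T) with hb'
    have hpb' : p • b' = 0 := by
      rw [hb', smul_smul, Nat.mul_div_cancel' hpn]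
      exact addOrderOf_nsmul_eq_zero _
    have hb'0 : b' ≠ 0 := by
      intro h
      have hz : (n / p) • (b0 : T) = 0 := by rw [← hb']; exact h
      have hdvd : n ∣ n / p := addOrderOf_dvd_iff_nsmul_eq_zero.mpr hz
      have hlt : n / p < n := Nat.div_lt_self (Nat.pos_of_ne_zero hn0) hp.one_lt
      have hpos : 0 < n / p := Nat.div_pos (Nat.le_of_dvd (Nat.pos_of_ne_zero hn0) hpn) hp.pos
      exact absurd (Nat.le_of_dvd hpos hdvd) (not_le.mpr hlt)
    have hordb' : addOrderOf b' = p := by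
      have h1 : addOrderOf b' ∣ p := addOrderOf_dvd_of_nsmul_eq_zero hpb'
      rcases (Nat.Prime.eq_one_or_self_of_dvd hp _ h1) with h | h
      · exact absurd (AddMonoid.addOrderOf_eq_one_iff.mp h) hb'0
      · exact h
    have hb'Tp : b' ∈ Tp := ⟨1, by rw [pow_one]; exact hpb'⟩
    have hb'B : b' ∈ B := AddSubgroup.nsmul_mem B b0.2 _
    -- the induced decomposition of Tp
    set Ap := A.addSubgroupOf Tp with hAp
    set Bp := B.addSubgroupOf Tp with hBp
    have memTp_of_dvd : ∀ {y : T} {j : ℕ}, (p ^ j) • y = 0 → y ∈ Tp := by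
      intro y j hy
      obtain ⟨i, _, hi⟩ := (Nat.dvd_prime_pow hp).mp (addOrderOf_dvd_of_nsmul_eq_zero hy)
      exact ⟨i, by rw [← hi]; exact addOrderOf_nsmul_eq_zero _⟩
    have hcompl : IsCompl Ap Bp := by
      constructor
      · rw [AddSubgroup.disjoint_def]
        intro x hxA hxB
        have : (x : T) = 0 := aux_disjoint_zero hAB.disjoint hxA hxB
        exact Subtype.ext this
      · rw [codisjoint_iff_le_sup]
        intro x _
        obtain ⟨a, ha, b, hb, hab⟩ := aux_exists_add hAB (x : T)
        obtain ⟨j, hj⟩ := x.2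
        have hxj : (p ^ j) • (x : T) = 0 := by
          rw [← hj]
        have hsum0 : (p ^ j) • a + (p ^ j) • b = 0 := by
          rw [← smul_add, hab, hxj]
        obtain ⟨ha0, hb0⟩ := aux_add_eq_zero hAB.disjoint
          (AddSubgroup.nsmul_mem A ha _) (AddSubgroup.nsmul_mem B hb _) hsum0
        have haTp : a ∈ Tp := memTp_of_dvd ha0
        have hbTp : b ∈ Tp := memTp_of_dvd hb0
        refine AddSubgroup.mem_sup.mpr ⟨⟨a, haTp⟩, ?_, ⟨b, hbTp⟩, ?_, ?_⟩
        · exact AddSubgroup.mem_addSubgroupOf.mpr ha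
        · exact AddSubgroup.mem_addSubgroupOf.mpr hb
        · exact Subtype.ext hab
    have hBpne : Bp ≠ ⊥ := by
      intro h
      have hmem : (⟨b', hb'Tp⟩ : Tp) ∈ Bp := AddSubgroup.mem_addSubgroupOf.mpr hb'B
      rw [h, AddSubgroup.mem_bot] at hmem
      exact hb'0 (by simpa using congrArg (fun z : Tp => (z : T)) hmem)
    -- the induced injection Tp → Ap
    have hmemφ : ∀ x : Tp, ((φ (x : T) : T)) ∈ Tp := by
      intro x
      obtain ⟨j, hj⟩ := x.2
      apply memTp_of_dvd (j := j)
      have : φ ((p ^ j) • (x : T)) = 0 := by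
        rw [show (p ^ j) • (x : T) = 0 by rw [← hj], map_zero]
      have := congrArg (fun z : A => (z : T)) this
      simpa [map_nsmul] using this
    set φp : Tp →+ Ap :=
      { toFun := fun x => ⟨⟨(φ (x : T) : T), hmemφ x⟩,
          AddSubgroup.mem_addSubgroupOf.mpr (φ (x : T)).2⟩,
        map_zero' := by ext; simp,
        map_add' := fun x y => by ext; simp } with hφp
    have hφpinj : Function.Injective φp := by
      intro x y hxy
      have h1 : ((φ (x : T) : T)) = ((φ (y : T) : T)) := by
        have := congrArg (fun z : Ap => ((z : Tp) : T)) hxy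
        simpa [hφp] using this
      have h2 : φ (x : T) = φ (y : T) := Subtype.ext h1
      exact Subtype.ext (hφ h2)
    exact hAll p hpf Ap Bp hcompl hBpne φp hφpinj
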